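/- The polygonal chain (1,2)-(2,0)-(0,1)-(2,2)-(1,0)-(0,2)-(2,1)-(0,0)-(√(5/2), √(5/2)) passes through all nine points of {0,1,2}×{0,1,2}. -/

import Mathlib

noncomputable def pt2 (a b : ℝ) : EuclideanSpace ℝ (Fin 2) := WithLp.toLp 2 ![a, b]

/-- The vertices of the self-intersecting covering path `M_{3,3}`. -/
noncomputable def M33 : Fin 9 → EuclideanSpace ℝ (Fin 2) :=
  ![pt2 1 2, pt2 2 0, pt2 0 1, pt2 2 2, pt2 1 0, pt2 0 2, pt2 2 1, pt2 0 0,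
    pt2 (Real.sqrt (5 / 2)) (Real.sqrt (5 / 2))]

lemma mid11 : pt2 1 1 ∈ segment ℝ (pt2 0 0) (pt2 (Real.sqrt (5 / 2)) (Real.sqrt (5 / 2))) := by
  set s := Real.sqrt (5 / 2) with hs
  have hs1 : 1 ≤ s := by
    rw [hs, show (1:ℝ) = Real.sqrt 1 by simp]
    exact Real.sqrt_le_sqrt (by norm_num)
  have hspos : 0 < s := lt_of_lt_of_le one_pos hs1
  refine ⟨1 - 1/s, 1/s, by
      have : 1/s ≤ 1 := by
        rw [div_le_one hspos]; exact hs1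
      linarith, by positivity, by ring, ?_⟩
  ext j
  fin_cases j <;>
    simp [pt2, PiLp.add_apply, PiLp.smul_apply, smul_eq_mul] <;>
    field_simp

theorem stmt8 :
    ∀ a b : ℝ, a ∈ ({0, 1, 2} : Set ℝ) → b ∈ ({0, 1, 2} : Set ℝ) →
      ∃ i : Fin 8, pt2 a b ∈ segment ℝ (M33 i.castSucc) (M33 i.succ) := by
  intro a b ha hb
  simp only [Set.mem_insert_iff, Set.mem_singleton_iff] at ha hb
  rcases ha with rfl | rfl | rfl <;> rcases hb with rfl | rfl | rfl
  · exact ⟨7, by simpa [M33] using left_mem_segment ℝ (pt2 0 0) (M33 8)⟩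
  · exact ⟨2, by simpa [M33] using left_mem_segment ℝ (pt2 0 1) (M33 3)⟩
  · exact ⟨5, by simpa [M33] using left_mem_segment ℝ (pt2 0 2) (M33 6)⟩
  · exact ⟨4, by simpa [M33] using left_mem_segment ℝ (pt2 1 0) (M33 5)⟩
  · exact ⟨7, by simpa [M33] using mid11⟩
  · exact ⟨0, by simpa [M33] using left_mem_segment ℝ (pt2 1 2) (M33 1)⟩
  · exact ⟨1, by simpa [M33] using left_mem_segment ℝ (pt2 2 0) (M33 2)⟩
  · exact ⟨6, by simpa [M33] using left_mem_segment ℝ (pt2 2 1) (M33 7)⟩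
  · exact ⟨3, by simpa [M33] using left_mem_segment ℝ (pt2 2 2) (M33 4)⟩
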